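/- Core inequality in Lemma S6 (additive model induces negative conditional association). Let μ be a Borel probability measure on ℝ, let u ∈ ℝ satisfy 0 < μ((−∞, u]) < 1, let γ : ℝ → ℝ be a non-decreasing measurable μ-integrable function, and let β0 ≤ β1 be reals such that 0 < β0 + γ(u') and β1 + γ(u') < 1 for μ-almost every u'. Define p11 := β1 + (∫_{(u,∞)} γ dμ)/μ((u,∞)), p10 := β0 + (∫_{(u,∞)} γ dμ)/μ((u,∞)), p01 := β1 + (∫_{(−∞,u]} γ dμ)/μ((−∞,u]), p00 := β0 + (∫_{(−∞,u]} γ dμ)/μ((−∞,u]). Then p11·p00 ≤ p10·p01 and (1 − p11)·(1 − p00) ≤ (1 − p10)·(1 − p01). -/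

import Mathlib

open MeasureTheory Set

/-- Core inequality in Lemma S6: the additive treatment model induces negative
conditional association between the instrument and the confounder given the
treatment. -/
theorem additive_model_negative_association
    (μ : Measure ℝ) [IsProbabilityMeasure μ]
    (u : ℝ) (hIic0 : 0 < μ (Set.Iic u)) (hIic1 : μ (Set.Iic u) < 1)
    (γ : ℝ → ℝ) (hγMeas : Measurable γ) (hγMono : Monotone γ) (hγInt : Integrable γ μ)
    (β0 β1 : ℝ) (hβ : β0 ≤ β1)
    (hBound : ∀ᵐ u' ∂μ, 0 < β0 + γ u' ∧ β1 + γ u' < 1)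
    (p11 p10 p01 p00 : ℝ)
    (hp11 : p11 = β1 + (∫ x in Set.Ioi u, γ x ∂μ) / (μ (Set.Ioi u)).toReal)
    (hp10 : p10 = β0 + (∫ x in Set.Ioi u, γ x ∂μ) / (μ (Set.Ioi u)).toReal)
    (hp01 : p01 = β1 + (∫ x in Set.Iic u, γ x ∂μ) / (μ (Set.Iic u)).toReal)
    (hp00 : p00 = β0 + (∫ x in Set.Iic u, γ x ∂μ) / (μ (Set.Iic u)).toReal) :
    p11 * p00 ≤ p10 * p01 ∧ (1 - p11) * (1 - p00) ≤ (1 - p10) * (1 - p01) := by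
  have hIoi0 : 0 < μ (Set.Ioi u) := by
    by_contra h
    push_neg at h
    have h0 : μ (Set.Ioi u) = 0 := le_antisymm h (zero_le)
    have : (1 : ENNReal) = μ (Set.Iic u ∪ Set.Ioi u) := by
      rw [Set.Iic_union_Ioi, measure_univ]
    have hle : (1 : ENNReal) ≤ μ (Set.Iic u) := by
      calc (1 : ENNReal) = μ (Set.Iic u ∪ Set.Ioi u) := this
        _ ≤ μ (Set.Iic u) + μ (Set.Ioi u) := measure_union_le _ _
        _ = μ (Set.Iic u) := by rw [h0, add_zero]
    exact absurd hIic1 (not_lt.mpr hle)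
  have hIicR : 0 < (μ (Set.Iic u)).toReal :=
    ENNReal.toReal_pos hIic0.ne' (measure_ne_top _ _)
  have hIoiR : 0 < (μ (Set.Ioi u)).toReal :=
    ENNReal.toReal_pos hIoi0.ne' (measure_ne_top _ _)
  set a : ℝ := (∫ x in Set.Ioi u, γ x ∂μ) / (μ (Set.Ioi u)).toReal with ha
  set b : ℝ := (∫ x in Set.Iic u, γ x ∂μ) / (μ (Set.Iic u)).toReal with hb
  have hba : b ≤ a := by
    have h1 : ∫ x in Set.Iic u, γ x ∂μ ≤ ∫ _x in Set.Iic u, γ u ∂μ := by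
      apply setIntegral_mono_on (hγInt.restrict) (integrable_const _) measurableSet_Iic
      intro x hx
      exact hγMono hx
    have h2 : ∫ _x in Set.Ioi u, γ u ∂μ ≤ ∫ x in Set.Ioi u, γ x ∂μ := by
      apply setIntegral_mono_on (integrable_const _) (hγInt.restrict) measurableSet_Ioi
      intro x hx
      exact hγMono (le_of_lt hx)
    simp only [setIntegral_const, smul_eq_mul, measureReal_def] at h1 h2
    have hbu : b ≤ γ u := by
      rw [hb, div_le_iff₀ hIicR]
      linarith [h1]
    have hua : γ u ≤ a := by
      rw [ha, le_div_iff₀ hIoiR]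
      linarith [h2]
    linarith
  subst hp11 hp10 hp01 hp00
  constructor <;> nlinarith [mul_nonneg (sub_nonneg.mpr hβ) (sub_nonneg.mpr hba)]
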